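/- Let μ = 1 (cubic NLS), α ∈ ℝ with α ≠ 0, N a positive integer, j an integer with 0 ≤ j ≤ N and 2j ≠ N, sign(2j − N) = sign(α), and ω > α²/(2j−N)². Set aʲ = (1/√ω) arctanh(α/((2j−N)√ω)). Then j · ∫₀^∞ 2ω sech²(√ω(x − aʲ)) dx + (N − j) · ∫₀^∞ 2ω sech²(√ω(x + aʲ)) dx = 2N√ω + 2α. In particular the squared L² norm of the stationary state Ψʲ_ω is 2N√ω + 2α, independent of j. -/

import Mathlib

open MeasureTheory Set Filter

/-- The inverse hyperbolic tangent. -/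
noncomputable def arctanh (x : ℝ) : ℝ := (1 / 2) * Real.log ((1 + x) / (1 - x))

lemma hasDerivAt_tanh (x : ℝ) :
    HasDerivAt Real.tanh (1 / Real.cosh x ^ 2) x := by
  have h := (Real.hasDerivAt_sinh x).div (Real.hasDerivAt_cosh x) (ne_of_gt (Real.cosh_pos x))
  have e : (Real.cosh x * Real.cosh x - Real.sinh x * Real.sinh x) / Real.cosh x ^ 2
      = 1 / Real.cosh x ^ 2 := by
    have := Real.cosh_sq_sub_sinh_sq x; rw [show Real.cosh x * Real.cosh x -
      Real.sinh x * Real.sinh x = 1 by nlinarith]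
  rw [← e]
  exact h.congr_of_eventuallyEq
    (by filter_upwards with y using (Real.tanh_eq_sinh_div_cosh y))

lemma continuous_tanh : Continuous Real.tanh := by
  have h : Continuous fun x => Real.sinh x / Real.cosh x :=
    Real.continuous_sinh.div Real.continuous_cosh fun x => (Real.cosh_pos x).ne'
  exact h.congr fun x => (Real.tanh_eq_sinh_div_cosh x).symm

lemma tanh_alt (x : ℝ) : Real.tanh x = (Real.exp (2 * x) - 1) / (Real.exp (2 * x) + 1) := by
  have hx : (0:ℝ) < Real.exp x := Real.exp_pos x
  have hx' : (0:ℝ) < Real.exp (-x) := Real.exp_pos _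
  rw [Real.tanh_eq_sinh_div_cosh, Real.sinh_eq, Real.cosh_eq, two_mul, Real.exp_add,
    Real.exp_neg]
  field_simp

lemma tendsto_tanh_atTop : Tendsto Real.tanh atTop (nhds 1) := by
  have h2 : Tendsto (fun x : ℝ => Real.exp (2 * x) + 1) atTop atTop := by
    apply tendsto_atTop_add_const_right
    exact Real.tendsto_exp_atTop.comp (tendsto_id.const_mul_atTop two_pos)
  have h3 : Tendsto (fun x : ℝ => 2 / (Real.exp (2 * x) + 1)) atTop (nhds 0) :=
    Tendsto.div_atTop tendsto_const_nhds h2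
  have h4 : Tendsto (fun x : ℝ => 1 - 2 / (Real.exp (2 * x) + 1)) atTop (nhds 1) := by
    simpa using tendsto_const_nhds.sub h3
  refine h4.congr fun x => ?_
  have hpos : (0:ℝ) < Real.exp (2 * x) + 1 := by positivity
  rw [tanh_alt]
  field_simp
  ring

lemma tanh_arctanh {y : ℝ} (hy : |y| < 1) : Real.tanh (arctanh y) = y := by
  have h1 : -1 < y := (abs_lt.1 hy).1
  have h2 : y < 1 := (abs_lt.1 hy).2
  have h3 : (1:ℝ) - y ≠ 0 := by linarith
  have hu : (0:ℝ) < (1 + y) / (1 - y) := by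
    apply div_pos <;> linarith
  have he : Real.exp (2 * arctanh y) = (1 + y) / (1 - y) := by
    rw [arctanh, show 2 * ((1/2 : ℝ) * Real.log ((1 + y) / (1 - y)))
      = Real.log ((1 + y) / (1 - y)) by ring, Real.exp_log hu]
  rw [tanh_alt, he]
  have h4 : (1 + y) / (1 - y) + 1 = 2 / (1 - y) := by
    field_simp
    ring
  rw [h4]
  have h5 : (2:ℝ) / (1 - y) ≠ 0 := div_ne_zero two_ne_zero h3
  field_simp
  ring

lemma integral_sech_sq (c b : ℝ) (hc : 0 < c) :
    (∫ x in Ioi (0:ℝ), 2 * c ^ 2 * (1 / Real.cosh (c * (x - b))) ^ 2)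
      = 2 * c * (1 + Real.tanh (c * b)) := by
  have hderiv : ∀ x ∈ Ioi (0:ℝ), HasDerivAt (fun x => 2 * c * Real.tanh (c * (x - b)))
      (2 * c ^ 2 * (1 / Real.cosh (c * (x - b))) ^ 2) x := by
    intro x _
    have h1 : HasDerivAt (fun x : ℝ => c * (x - b)) c x := by
      simpa using ((hasDerivAt_id x).sub_const b).const_mul c
    have h2 := ((hasDerivAt_tanh (c * (x - b))).comp x h1).const_mul (2 * c)
    refine h2.congr_deriv ?_
    have := Real.cosh_pos (c * (x - b))
    ring
  have hcont : ContinuousWithinAt (fun x => 2 * c * Real.tanh (c * (x - b))) (Ici 0) 0 := by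
    apply Continuous.continuousWithinAt
    exact continuous_const.mul
      (continuous_tanh.comp (continuous_const.mul (continuous_id.sub continuous_const)))
  have hpos : ∀ x ∈ Ioi (0:ℝ), 0 ≤ 2 * c ^ 2 * (1 / Real.cosh (c * (x - b))) ^ 2 := by
    intro x _; positivity
  have hinner : Tendsto (fun x : ℝ => c * (x - b)) atTop atTop := by
    apply Tendsto.const_mul_atTop hc
    exact (tendsto_atTop_add_const_right atTop (-b) tendsto_id).congr
      fun x => by simp [sub_eq_add_neg]
  have htend : Tendsto (fun x => 2 * c * Real.tanh (c * (x - b))) atTop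
      (nhds (2 * c * 1)) := (tendsto_tanh_atTop.comp hinner).const_mul (2 * c)
  rw [integral_Ioi_of_hasDerivAt_of_nonneg hcont hderiv hpos htend]
  have : (0:ℝ) - b = -b := by ring
  rw [this, show c * (-b) = -(c * b) by ring, Real.tanh_neg]
  ring

theorem stmt_6 (α : ℝ) (hα : α ≠ 0) (N : ℕ) (hN : 0 < N)
    (j : ℕ) (hj : j ≤ N) (hjN : 2 * j ≠ N)
    (hsign : (0 < α ∧ (N : ℤ) < 2 * j) ∨ (α < 0 ∧ (2 * j : ℤ) < N))
    (ω : ℝ) (hω : ω > α ^ 2 / (2 * (j : ℝ) - N) ^ 2)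
    (aj : ℝ) (haj : aj = 1 / Real.sqrt ω * arctanh (α / ((2 * (j : ℝ) - N) * Real.sqrt ω))) :
    -- the squared L² norm (mass) of the cubic (μ = 1) stationary state `Ψʲ_ω`,
    -- with `j` bumps and `N − j` tails, equals `2N√ω + 2α`, independently of `j`
    (j : ℝ) * (∫ x in Ioi (0 : ℝ), 2 * ω * (1 / Real.cosh (Real.sqrt ω * (x - aj))) ^ 2)
      + ((N : ℝ) - j) *
        (∫ x in Ioi (0 : ℝ), 2 * ω * (1 / Real.cosh (Real.sqrt ω * (x + aj))) ^ 2)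
      = 2 * N * Real.sqrt ω + 2 * α := by
  -- basic facts
  have hd : (2 * (j:ℝ) - N) ≠ 0 := by
    rcases hsign with ⟨_, h⟩ | ⟨_, h⟩
    · have : (N:ℝ) < 2 * j := by exact_mod_cast h
      linarith
    · have : 2 * (j:ℝ) < N := by exact_mod_cast h
      linarith
  have hω0 : 0 < ω := lt_of_le_of_lt (by positivity) hω
  set c := Real.sqrt ω with hc
  have hc0 : 0 < c := Real.sqrt_pos.2 hω0
  have hcsq : c ^ 2 = ω := Real.sq_sqrt hω0.le
  set y := α / ((2 * (j : ℝ) - N) * c) with hy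
  have hy1 : |y| < 1 := by
    have h1 : y ^ 2 < 1 := by
      rw [hy, div_pow, mul_pow, hcsq]
      rw [div_lt_one (by positivity)]
      calc α ^ 2 < (2 * (j:ℝ) - N) ^ 2 * ω := by
            rw [gt_iff_lt, div_lt_iff₀ (by positivity)] at hω
            linarith [hω]
        _ = (2 * (j:ℝ) - N) ^ 2 * ω := rfl
    nlinarith [sq_abs y, abs_nonneg y]
  have hcaj : c * aj = arctanh y := by
    rw [haj]
    field_simp
  -- the two integrals
  have I1 : (∫ x in Ioi (0 : ℝ), 2 * ω * (1 / Real.cosh (c * (x - aj))) ^ 2)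
      = 2 * c * (1 + Real.tanh (c * aj)) := by
    rw [← hcsq]; exact integral_sech_sq c aj hc0
  have I2 : (∫ x in Ioi (0 : ℝ), 2 * ω * (1 / Real.cosh (c * (x + aj))) ^ 2)
      = 2 * c * (1 + Real.tanh (-(c * aj))) := by
    rw [← hcsq]
    have := integral_sech_sq c (-aj) hc0
    simpa [sub_neg_eq_add, mul_neg] using this
  rw [I1, I2, Real.tanh_neg, hcaj, tanh_arctanh hy1]
  have hjN' : (j:ℝ) ≤ N := by exact_mod_cast hj
  have hyval : (2 * (j:ℝ) - N) * c * y = α := by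
    rw [hy]
    field_simp
  nlinarith [hyval]
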